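/- If n ≡ 2 (mod 4), then ν₂(n) is even. -/

import Mathlib

lemma even_card_of_involution {α : Type*} [DecidableEq α] (s : Finset α) (f : α → α)
    (hmem : ∀ x ∈ s, f x ∈ s) (hinv : ∀ x ∈ s, f (f x) = x) (hne : ∀ x ∈ s, f x ≠ x) :
    2 ∣ s.card := by
  induction s using Finset.strongInduction with
  | _ s ih =>
    rcases s.eq_empty_or_nonempty with rfl | ⟨x, hx⟩
    · simp
    · have hfx := hmem x hx
      have hxne := hne x hx
      set t := s \ {x, f x} with ht
      have htsub : t ⊂ s := by
        apply Finset.ssubset_iff_of_subset (Finset.sdiff_subset) |>.mpr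
        exact ⟨x, hx, by simp [ht]⟩
      have hcard : t.card = s.card - 2 := by
        rw [ht, Finset.card_sdiff_of_subset (by intro y hy; simp at hy; rcases hy with rfl | rfl <;> assumption)]
        simp [Finset.card_insert_of_notMem, Ne.symm hxne]
      have h2 : 2 ≤ s.card := by
        have : ({x, f x} : Finset α) ⊆ s := by
          intro y hy; simp at hy; rcases hy with rfl | rfl <;> assumption
        calc 2 = ({x, f x} : Finset α).card := by simp [Ne.symm hxne]
        _ ≤ s.card := Finset.card_le_card this
      have key : 2 ∣ t.card := by
        apply ih t htsub
        · intro y hy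
          rw [ht, Finset.mem_sdiff] at hy ⊢
          obtain ⟨hys, hyn⟩ := hy
          refine ⟨hmem y hys, ?_⟩
          simp only [Finset.mem_insert, Finset.mem_singleton] at hyn ⊢
          push_neg at hyn ⊢
          constructor
          · rintro rfl
            exact hyn.2 (hinv y hys).symm
          · intro h
            have := congrArg f h
            rw [hinv y hys, hinv x hx] at this
            exact hyn.1 this
        · intro y hy; exact hinv y (Finset.mem_sdiff.mp hy).1
        · intro y hy; exact hne y (Finset.mem_sdiff.mp hy).1
      omega


def numPartSizes {n : ℕ} (p : n.Partition) : ℕ := p.parts.toFinset.card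

/-- `nu k n` is the number of partitions of `n` into exactly `k` distinct part sizes. -/
def nu (k n : ℕ) : ℕ := Finset.card (Finset.univ.filter (fun p : n.Partition => numPartSizes p = k))

def quadSet (n : ℕ) : Finset (ℕ × ℕ × ℕ × ℕ) :=
  ((Finset.range (n+1)) ×ˢ (Finset.range (n+1)) ×ˢ (Finset.range (n+1)) ×ˢ (Finset.range (n+1))).filter
    (fun q => q.2.1 < q.1 ∧ 0 < q.2.1 ∧ 0 < q.2.2.1 ∧ 0 < q.2.2.2 ∧
      q.1 * q.2.2.1 + q.2.1 * q.2.2.2 = n)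

lemma mem_quadSet {n a b i j : ℕ} :
    (a, b, i, j) ∈ quadSet n ↔ b < a ∧ 0 < b ∧ 0 < i ∧ 0 < j ∧ a * i + b * j = n := by
  simp only [quadSet, Finset.mem_filter, Finset.mem_product, Finset.mem_range]
  constructor
  · rintro ⟨-, h⟩; exact h
  · rintro ⟨h1, h2, h3, h4, h5⟩
    refine ⟨⟨?_, ?_, ?_, ?_⟩, h1, h2, h3, h4, h5⟩ <;> nlinarith

/-- The multiset `a^i b^j`. -/
def M (a b i j : ℕ) : Multiset ℕ := Multiset.replicate i a + Multiset.replicate j b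

lemma M_count_a {a b i j : ℕ} (hba : b < a) : (M a b i j).count a = i := by
  simp [M, Multiset.count_replicate, hba.ne, hba.ne']

lemma M_count_b {a b i j : ℕ} (hba : b < a) : (M a b i j).count b = j := by
  simp [M, Multiset.count_replicate, hba.ne, hba.ne']

lemma M_toFinset {a b i j : ℕ} (hi : 0 < i) (hj : 0 < j) :
    (M a b i j).toFinset = {a, b} := by
  simp [M, Multiset.toFinset_add, Multiset.toFinset_replicate, hi.ne', hj.ne']

lemma M_mem {a b i j x : ℕ} (hi : 0 < i) (hj : 0 < j) :
    x ∈ M a b i j ↔ x = a ∨ x = b := by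
  simp [M, Multiset.mem_replicate, hi.ne', hj.ne']

lemma M_sum {a b i j : ℕ} : (M a b i j).sum = a * i + b * j := by
  simp [M, Multiset.sum_replicate, mul_comm]

/-- The partition corresponding to a quadruple. -/
def quadPart (n : ℕ) (q : ℕ × ℕ × ℕ × ℕ) (hq : q ∈ quadSet n) : n.Partition where
  parts := M q.1 q.2.1 q.2.2.1 q.2.2.2
  parts_pos := by
    obtain ⟨a, b, i, j⟩ := q
    rw [mem_quadSet] at hq
    intro x hx
    rw [M_mem hq.2.2.1 hq.2.2.2.1] at hx
    rcases hx with rfl | rfl <;> omega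
  parts_sum := by
    obtain ⟨a, b, i, j⟩ := q
    rw [mem_quadSet] at hq
    rw [M_sum]; exact hq.2.2.2.2

lemma nu_two_eq_card_quadSet (n : ℕ) : nu 2 n = (quadSet n).card := by
  rw [nu]
  symm
  apply Finset.card_bij (quadPart n)
  · -- maps into
    rintro ⟨a, b, i, j⟩ hq
    rw [mem_quadSet] at hq
    simp only [Finset.mem_filter, Finset.mem_univ, true_and]
    simp only [numPartSizes, quadPart]
    rw [M_toFinset hq.2.2.1 hq.2.2.2.1]
    rw [Finset.card_insert_of_notMem (by simp [hq.1.ne'])]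
    simp
  · -- injective
    rintro ⟨a, b, i, j⟩ hq ⟨a', b', i', j'⟩ hq' heq
    rw [mem_quadSet] at hq hq'
    obtain ⟨hba, hb, hi, hj, hs⟩ := hq
    obtain ⟨hba', hb', hi', hj', hs'⟩ := hq'
    have hM : M a b i j = M a' b' i' j' := congrArg Nat.Partition.parts heq
    have ha : a = a' := by
      have h1 : a ∈ M a' b' i' j' := by rw [← hM, M_mem hi hj]; left; rfl
      have h2 : a' ∈ M a b i j := by rw [hM, M_mem hi' hj']; left; rfl
      rw [M_mem hi' hj'] at h1
      rw [M_mem hi hj] at h2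
      omega
    subst ha
    have hbb : b = b' := by
      have h1 : b ∈ M a b' i' j' := by rw [← hM, M_mem hi hj]; right; rfl
      rw [M_mem hi' hj'] at h1
      omega
    subst hbb
    have hii : i = i' := by
      have := congrArg (Multiset.count a) hM
      rwa [M_count_a hba, M_count_a hba] at this
    have hjj : j = j' := by
      have := congrArg (Multiset.count b) hM
      rwa [M_count_b hba, M_count_b hba] at this
    simp [hii, hjj]
  · -- surjective
    rintro p hp
    simp only [Finset.mem_filter, Finset.mem_univ, true_and] at hp
    simp only [numPartSizes] at hp
    obtain ⟨x, y, hxy, hxyeq⟩ := Finset.card_eq_two.mp hp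
    -- wlog y < x
    obtain ⟨a, b, hba, hab⟩ : ∃ a b, b < a ∧ p.parts.toFinset = {a, b} := by
      rcases hxy.lt_or_gt with h | h
      · exact ⟨y, x, h, by rw [hxyeq, Finset.pair_comm]⟩
      · exact ⟨x, y, h, hxyeq⟩
    have hamem : a ∈ p.parts := by rw [← Multiset.mem_toFinset, hab]; simp
    have hbmem : b ∈ p.parts := by rw [← Multiset.mem_toFinset, hab]; simp
    set i := p.parts.count a with hidef
    set j := p.parts.count b with hjdef
    have hi : 0 < i := Multiset.count_pos.mpr hamem
    have hj : 0 < j := Multiset.count_pos.mpr hbmem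
    have hb : 0 < b := p.parts_pos hbmem
    have hparts : p.parts = M a b i j := by
      have := Multiset.toFinset_sum_count_nsmul_eq p.parts
      rw [hab, Finset.sum_pair hba.ne'] at this
      rw [← this, M, Multiset.nsmul_singleton, Multiset.nsmul_singleton]
    have hsum : a * i + b * j = n := by
      rw [← p.parts_sum, hparts, M_sum]
    have hq : (a, b, i, j) ∈ quadSet n := mem_quadSet.mpr ⟨hba, hb, hi, hj, hsum⟩
    refine ⟨(a, b, i, j), hq, ?_⟩
    apply Nat.Partition.ext
    rw [quadPart]
    exact hparts.symm

theorem nu_two_even_of_two_mod_four (n : ℕ) (hn : n % 4 = 2) :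
    2 ∣ nu 2 n := by
  rw [nu_two_eq_card_quadSet]
  apply even_card_of_involution (quadSet n)
    (fun q => (q.2.2.1 + q.2.2.2, q.2.2.1, q.2.1, q.1 - q.2.1))
  · rintro ⟨a, b, i, j⟩ hq
    rw [mem_quadSet] at hq
    obtain ⟨hba, hb, hi, hj, hs⟩ := hq
    dsimp only
    rw [mem_quadSet]
    obtain ⟨c, rfl⟩ : ∃ c, a = b + c := ⟨a - b, by omega⟩
    refine ⟨by omega, hi, hb, by omega, ?_⟩
    have hc : b + c - b = c := by omega
    rw [hc]
    nlinarith
  · rintro ⟨a, b, i, j⟩ hq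
    rw [mem_quadSet] at hq
    dsimp only
    simp only [Prod.mk.injEq]
    obtain ⟨hba, hb, hi, hj, hs⟩ := hq
    exact ⟨by omega, trivial, trivial, by omega⟩
  · rintro ⟨a, b, i, j⟩ hq heq
    rw [mem_quadSet] at hq
    obtain ⟨hba, hb, hi, hj, hs⟩ := hq
    simp only [Prod.mk.injEq] at heq
    obtain ⟨h1, h2, h3, h4⟩ := heq
    have hn2 : n = i * i + 2 * (i * j) := by
      subst h2; nlinarith
    rcases Nat.even_or_odd i with ⟨m, rfl⟩ | ⟨m, rfl⟩
    · obtain ⟨K, hK⟩ : ∃ K, n = 4 * K := ⟨m * m + m * j, by rw [hn2]; ring⟩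
      omega
    · obtain ⟨K, hK⟩ : ∃ K, n = 2 * K + 1 :=
        ⟨2 * (m * m) + 2 * m + (2 * m + 1) * j, by rw [hn2]; ring⟩
      omega
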